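/- Let a > 0. For every positive integer n and every real x, ∑_{i=1}^{n} A_i(x) C_{n-i}^{(a)}(x-1) = (-1)^n [C_n^{(a)}(-1) C_n^{(a)}(x-2) − C_n^{(a)}(-2) C_n^{(a)}(x-1)], where, for i ≥ 1, A_i(x) = ∑_{k=1}^i (-1)^k C_{i-k}^{(-a)}(-x+1) [C_k^{(a)}(-1) C_k^{(a)}(x-2) − C_k^{(a)}(-2) C_k^{(a)}(x-1)]. -/

import Mathlib

/-- Generalized binomial coefficient `x(x-1)⋯(x-k+1)/k!`. -/
noncomputable def genChoose (x : ℝ) (k : ℕ) : ℝ :=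
  (∏ j ∈ Finset.range k, (x - (j : ℝ))) / (Nat.factorial k : ℝ)

/-- The Charlier polynomial `C_n^{(a)}(x) = ∑_{k=0}^n (x choose k) (-a)^{n-k}/(n-k)!`. -/
noncomputable def charlier (a : ℝ) (n : ℕ) (x : ℝ) : ℝ :=
  ∑ k ∈ Finset.range (n + 1),
    genChoose x k * (-a) ^ (n - k) / (Nat.factorial (n - k) : ℝ)

/-- Charlier polynomial with integer index, with the convention `C_{-1}^{(a)} ≡ 0`. -/
noncomputable def charlierZ (a : ℝ) (n : ℤ) (x : ℝ) : ℝ :=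
  if 0 ≤ n then charlier a n.toNat x else 0

/-- Forward difference operator `Δf(x) = f(x+1) - f(x)`. -/
def fdiff (f : ℝ → ℝ) : ℝ → ℝ := fun x => f (x + 1) - f x

/-- Backward difference operator `∇f(x) = f(x) - f(x-1)`. -/
def bdiff (f : ℝ → ℝ) : ℝ → ℝ := fun x => f x - f (x - 1)

/-- The generalized Charlier polynomial
`C_n^{a,N}(x) = [1 + N(-1)^n C_n^{(a)}(-1)] C_n^{(a)}(x) - N(-1)^n C_n^{(a)}(0) C_n^{(a)}(x-1)`. -/
noncomputable def genCharlier (a N : ℝ) (n : ℕ) (x : ℝ) : ℝ :=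
  (1 + N * (-1) ^ n * charlier a n (-1)) * charlier a n x
    - N * (-1) ^ n * charlier a n 0 * charlier a n (x - 1)

/-- The coefficient `A_i(x)` (for `i ≥ 1`) of the difference equation. -/
noncomputable def Acoef (a : ℝ) (i : ℕ) (x : ℝ) : ℝ :=
  ∑ k ∈ Finset.Icc 1 i, (-1 : ℝ) ^ k * charlier (-a) (i - k) (-x + 1) *
    (charlier a k (-1) * charlier a k (x - 2) - charlier a k (-2) * charlier a k (x - 1))

/-- The coefficient `A_0 = (-1)^{n-1} C_{n-1}^{(a)}(-2)` (with `C_{-1}^{(a)} ≡ 0`). -/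
noncomputable def A0coef (a : ℝ) (n : ℕ) : ℝ :=
  (-1 : ℝ) ^ ((n : ℤ) - 1) * charlierZ a ((n : ℤ) - 1) (-2)

/-- For `n ≥ 1`,
`∑_{i=1}^n A_i(x) C_{n-i}^{(a)}(x-1) = (-1)^n [C_n^{(a)}(-1) C_n^{(a)}(x-2) - C_n^{(a)}(-2) C_n^{(a)}(x-1)]`. -/

lemma smeval_descPochhammer_real (x : ℝ) : ∀ n : ℕ,
    (descPochhammer ℤ n).smeval x = ∏ j ∈ Finset.range n, (x - (j : ℝ))
  | 0 => by simp [descPochhammer_zero, Polynomial.smeval_one]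
  | n + 1 => by
    rw [descPochhammer_succ_right, Polynomial.smeval_mul, smeval_descPochhammer_real x n,
      Finset.prod_range_succ, Polynomial.smeval_sub, Polynomial.smeval_X,
      Polynomial.smeval_natCast]
    simp

lemma genChoose_eq_ringChoose (x : ℝ) (n : ℕ) : genChoose x n = Ring.choose x n := by
  have h := Ring.descPochhammer_eq_factorial_smul_choose x n
  rw [smeval_descPochhammer_real] at h
  rw [genChoose, h, nsmul_eq_mul]
  field_simp

lemma genChoose_vandermonde (x y : ℝ) (m : ℕ) :
    ∑ p ∈ Finset.range (m + 1), genChoose x p * genChoose y (m - p) = genChoose (x + y) m := by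
  simp only [genChoose_eq_ringChoose]
  rw [Ring.add_choose_eq m (Commute.all x y),
    Finset.Nat.sum_antidiagonal_eq_sum_range_succ_mk]

lemma genChoose_zero_left (m : ℕ) : genChoose 0 m = if m = 0 then 1 else 0 := by
  cases m with
  | zero => simp [genChoose]
  | succ n =>
    simp only [genChoose, Nat.succ_ne_zero, if_false]
    rw [Finset.prod_range_succ']
    simp

open PowerSeries in
lemma charlier_convolution (a y : ℝ) (m : ℕ) :
    ∑ j ∈ Finset.range (m + 1), charlier (-a) j (-y) * charlier a (m - j) y
      = if m = 0 then 1 else 0 := by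
  set G1 : PowerSeries ℝ := PowerSeries.mk fun k => genChoose (-y) k with hG1
  set E1 : PowerSeries ℝ := PowerSeries.mk fun j => a ^ j / (Nat.factorial j : ℝ) with hE1
  set G2 : PowerSeries ℝ := PowerSeries.mk fun k => genChoose y k with hG2
  set E2 : PowerSeries ℝ := PowerSeries.mk fun j => (-a) ^ j / (Nat.factorial j : ℝ) with hE2
  have hch : ∀ n : ℕ, charlier a n y = coeff n (G2 * E2) := by
    intro n
    rw [coeff_mul, Finset.Nat.sum_antidiagonal_eq_sum_range_succ_mk, charlier]
    simp [hG2, hE2, mul_div_assoc]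
  have hch' : ∀ n : ℕ, charlier (-a) n (-y) = coeff n (G1 * E1) := by
    intro n
    rw [coeff_mul, Finset.Nat.sum_antidiagonal_eq_sum_range_succ_mk, charlier]
    simp [hG1, hE1, mul_div_assoc]
  have hGG : G1 * G2 = 1 := by
    ext n
    rw [coeff_mul, Finset.Nat.sum_antidiagonal_eq_sum_range_succ_mk]
    simp only [hG1, hG2, coeff_mk]
    rw [genChoose_vandermonde, neg_add_cancel, genChoose_zero_left, coeff_one]
  have hEE : E1 * E2 = 1 := by
    ext n
    rw [coeff_mul, Finset.Nat.sum_antidiagonal_eq_sum_range_succ_mk]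
    simp only [hE1, hE2, coeff_mk]
    have step : ∀ k ∈ Finset.range (n + 1),
        a ^ k / (Nat.factorial k : ℝ) * ((-a) ^ (n - k) / (Nat.factorial (n - k) : ℝ))
          = a ^ k * (-a) ^ (n - k) * (n.choose k : ℝ) / (Nat.factorial n : ℝ) := by
      intro k hk
      rw [Nat.cast_choose ℝ (Nat.lt_succ_iff.mp (Finset.mem_range.mp hk))]
      have h1 : (Nat.factorial k : ℝ) ≠ 0 := Nat.cast_ne_zero.mpr (Nat.factorial_ne_zero k)
      have h2 : (Nat.factorial (n - k) : ℝ) ≠ 0 := Nat.cast_ne_zero.mpr (Nat.factorial_ne_zero _)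
      have h3 : (Nat.factorial n : ℝ) ≠ 0 := Nat.cast_ne_zero.mpr (Nat.factorial_ne_zero n)
      field_simp
    rw [Finset.sum_congr rfl step, ← Finset.sum_div, ← add_pow, add_neg_cancel, coeff_one]
    rcases Nat.eq_zero_or_pos n with h | h
    · simp [h]
    · rw [zero_pow (Nat.pos_iff_ne_zero.mp h), if_neg (Nat.pos_iff_ne_zero.mp h), zero_div]
  have : ∑ j ∈ Finset.range (m + 1), charlier (-a) j (-y) * charlier a (m - j) y
      = coeff m ((G1 * E1) * (G2 * E2)) := by
    rw [coeff_mul, Finset.Nat.sum_antidiagonal_eq_sum_range_succ_mk]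
    exact Finset.sum_congr rfl fun j _ => by rw [hch, hch']
  rw [this, show (G1 * E1) * (G2 * E2) = (G1 * G2) * (E1 * E2) by ring, hGG, hEE, one_mul,
    coeff_one]

lemma sum_Icc_swap (n : ℕ) (F : ℕ → ℕ → ℝ) :
    ∑ i ∈ Finset.Icc 1 n, ∑ k ∈ Finset.Icc 1 i, F i k
      = ∑ k ∈ Finset.Icc 1 n, ∑ i ∈ Finset.Icc k n, F i k := by
  have h1 : ∀ i ∈ Finset.Icc 1 n, ∑ k ∈ Finset.Icc 1 i, F i k
      = ∑ k ∈ Finset.Icc 1 n, if k ≤ i then F i k else 0 := by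
    intro i hi
    rw [← Finset.sum_filter]
    congr 1
    ext k
    simp only [Finset.mem_filter, Finset.mem_Icc]
    constructor
    · rintro ⟨h, h'⟩; exact ⟨⟨h, le_trans h' (Finset.mem_Icc.mp hi).2⟩, h'⟩
    · rintro ⟨⟨h, _⟩, h'⟩; exact ⟨h, h'⟩
  rw [Finset.sum_congr rfl h1, Finset.sum_comm]
  refine Finset.sum_congr rfl fun k hk => ?_
  rw [← Finset.sum_filter]
  congr 1
  ext i
  simp only [Finset.mem_filter, Finset.mem_Icc]
  have h := Finset.mem_Icc.mp hk
  constructor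
  · rintro ⟨⟨_, h2⟩, h3⟩; exact ⟨h3, h2⟩
  · rintro ⟨h2, h3⟩; exact ⟨⟨le_trans h.1 h2, h3⟩, h2⟩

theorem charlier_Acoef_convolution (a : ℝ) (ha : 0 < a) (n : ℕ) (hn : 1 ≤ n) (x : ℝ) :
    ∑ i ∈ Finset.Icc 1 n, Acoef a i x * charlier a (n - i) (x - 1)
      = (-1 : ℝ) ^ n *
        (charlier a n (-1) * charlier a n (x - 2) - charlier a n (-2) * charlier a n (x - 1)) := by
  set B : ℕ → ℝ := fun k =>
    charlier a k (-1) * charlier a k (x - 2) - charlier a k (-2) * charlier a k (x - 1) with hB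
  have expand : ∀ i, Acoef a i x * charlier a (n - i) (x - 1)
      = ∑ k ∈ Finset.Icc 1 i,
          (-1 : ℝ) ^ k * charlier (-a) (i - k) (-x + 1) * B k * charlier a (n - i) (x - 1) := by
    intro i
    rw [Acoef, Finset.sum_mul]
  rw [Finset.sum_congr rfl fun i _ => expand i,
    sum_Icc_swap n (fun i k => (-1 : ℝ) ^ k * charlier (-a) (i - k) (-x + 1) * B k *
      charlier a (n - i) (x - 1))]
  have inner : ∀ k ∈ Finset.Icc 1 n,
      ∑ i ∈ Finset.Icc k n, (-1 : ℝ) ^ k * charlier (-a) (i - k) (-x + 1) * B k *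
        charlier a (n - i) (x - 1)
      = (-1 : ℝ) ^ k * B k * (if k = n then 1 else 0) := by
    intro k hk
    obtain ⟨hk1, hkn⟩ := Finset.mem_Icc.mp hk
    have key : ∑ i ∈ Finset.Icc k n, charlier (-a) (i - k) (-x + 1) * charlier a (n - i) (x - 1)
        = if k = n then 1 else 0 := by
      have hIcc : Finset.Icc k n = Finset.Ico k (n + 1) := by
        ext i; simp [Nat.lt_succ_iff]
      rw [hIcc, Finset.sum_Ico_eq_sum_range]
      have hrw : n + 1 - k = (n - k) + 1 := by omega
      rw [hrw]
      have := charlier_convolution a (x - 1) (n - k)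
      have hy : -(x - 1) = -x + 1 := by ring
      rw [hy] at this
      have heq : (n - k = 0) ↔ (k = n) := by omega
      rw [← if_congr heq rfl rfl, ← this]
      refine Finset.sum_congr rfl fun j hj => ?_
      rw [show k + j - k = j by omega, show n - (k + j) = n - k - j by omega]
    calc ∑ i ∈ Finset.Icc k n, (-1 : ℝ) ^ k * charlier (-a) (i - k) (-x + 1) * B k *
          charlier a (n - i) (x - 1)
        = (-1 : ℝ) ^ k * B k *
            ∑ i ∈ Finset.Icc k n, charlier (-a) (i - k) (-x + 1) * charlier a (n - i) (x - 1) := by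
          rw [Finset.mul_sum]; exact Finset.sum_congr rfl fun i _ => by ring
      _ = (-1 : ℝ) ^ k * B k * (if k = n then 1 else 0) := by
          rw [key]
  rw [Finset.sum_congr rfl inner]
  simp only [mul_ite, mul_one, mul_zero]
  rw [Finset.sum_ite_eq' (Finset.Icc 1 n) n (fun k => (-1 : ℝ) ^ k * B k),
    if_pos (Finset.mem_Icc.mpr ⟨hn, le_refl n⟩)]
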